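/- Let Y be a connected graph on n vertices and π a permutation of its vertices. If g ≠ g′ are elements of the dihedral group D_n = ⟨σ, ρ⟩ acting on positions and [g·π]_Y = [g′·π]_Y, then Y is bipartite. -/

import Mathlib

namespace AcycPaper

variable {V : Type*}

/-- `r` is an orientation of the graph `Y`: exactly one direction per edge. -/
def IsOrientation (Y : SimpleGraph V) (r : V → V → Prop) : Prop :=
  (∀ i j, Y.Adj i j ↔ (r i j ∨ r j i)) ∧ ∀ i j, r i j → ¬ r j i

/-- A relation is acyclic if it has no directed cycles. -/
def IsAcyclicRel (r : V → V → Prop) : Prop := ∀ v, ¬ Relation.TransGen r v v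

/-- The set of acyclic orientations of `Y`. -/
def Acyc (Y : SimpleGraph V) : Set (V → V → Prop) :=
  {r | IsOrientation Y r ∧ IsAcyclicRel r}

/-- `v` is a source: no edge points into `v`. -/
def IsSource (r : V → V → Prop) (v : V) : Prop := ∀ j, ¬ r j v

open Classical in
/-- Click (source-to-sink move) at `v`: reverse all edges incident to `v`. -/
def click (r : V → V → Prop) (v : V) : V → V → Prop :=
  fun i j => if v = i ∨ v = j then r j i else r i j

/-- One click step between acyclic orientations. -/
def ClickStep (Y : SimpleGraph V) (r r' : V → V → Prop) : Prop :=
  r ∈ Acyc Y ∧ ∃ v, IsSource r v ∧ r' = click r v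

/-- κ-equivalence: the equivalence relation generated by clicks. -/
def KEquiv (Y : SimpleGraph V) : (V → V → Prop) → (V → V → Prop) → Prop :=
  Relation.EqvGen (ClickStep Y)

/-- The set of κ-equivalence classes of acyclic orientations. -/
def KQuot (Y : SimpleGraph V) := Quot (fun a b : Acyc Y => ClickStep Y a.1 b.1)

/-- κ(Y): number of κ-equivalence classes. -/
noncomputable def kappa (Y : SimpleGraph V) : ℕ := Nat.card (KQuot Y)

/-- α(Y): number of acyclic orientations. -/
noncomputable def alpha (Y : SimpleGraph V) : ℕ := Nat.card (Acyc Y)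

/-- Adjacency in the update graph U(Y): the two permutations differ by swapping
two consecutive positions holding vertices non-adjacent in `Y`. -/
def UpdateAdj {n : ℕ} (Y : SimpleGraph (Fin n)) (π π' : Equiv.Perm (Fin n)) : Prop :=
  ∃ (k : ℕ) (hk : k + 1 < n),
    ¬ Y.Adj (π ⟨k, Nat.lt_of_succ_lt hk⟩) (π ⟨k + 1, hk⟩) ∧
    π' = π * Equiv.swap ⟨k, Nat.lt_of_succ_lt hk⟩ ⟨k + 1, hk⟩

open Equiv

section Helpers

lemma mod2 (a n : ℕ) (h : a < 2*n) : a % n = if a < n then a else a - n := by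
  split
  · exact Nat.mod_eq_of_lt ‹_›
  · rw [Nat.mod_eq_sub_mod (by omega)]
    exact Nat.mod_eq_of_lt (by omega)

lemma cutA (n P Q k : ℕ) (hP : P<n) (hQ : Q<n) (hk0 : 0<k) (hkn : k<n)
    (h : P<Q ↔ (P+(n-k))%n<(Q+(n-k))%n) : (P<k ↔ Q<k) := by
  rw [mod2 _ _ (by omega), mod2 _ _ (by omega)] at h
  split_ifs at h <;> omega

lemma cutB (n P Q k : ℕ) (hP : P<n) (hQ : Q<n) (hkn : k<n) (hne : P≠Q)
    (h : P<Q ↔ n-((P+(n-k))%n+1) < n-((Q+(n-k))%n+1)) : ((P<k) ↔ ¬(Q<k)) := by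
  rw [mod2 _ _ (by omega), mod2 _ _ (by omega)] at h
  split_ifs at h <;> omega

open Fin.NatCast in
lemma rot_pow {N : ℕ} (m : ℕ) (p : Fin (N+1)) :
    ((finRotate (N+1))^m) p = p + (m : Fin (N+1)) := by
  induction m with
  | zero => simp
  | succ m ih =>
      rw [pow_succ', Equiv.Perm.mul_apply, ih, finRotate_succ_apply]
      push_cast
      rw [add_assoc]

open Fin.NatCast in
lemma rot_val {N : ℕ} (m : ℕ) (p : Fin (N+1)) :
    (((finRotate (N+1))^m) p : ℕ) = ((p:ℕ) + m) % (N+1) := by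
  rw [rot_pow, Fin.val_add, Fin.val_natCast, Nat.add_mod, Nat.mod_mod_of_dvd]
  · rw [← Nat.add_mod]
  · exact dvd_refl _

lemma rot_order {N : ℕ} : (finRotate (N+1))^(N+1) = 1 := by
  ext p
  simp [rot_val]; omega

lemma rev_mul_rev {n : ℕ} : (Fin.revPerm * Fin.revPerm : Perm (Fin n)) = 1 := by
  ext i; simp

lemma rev_rot_rev {N : ℕ} :
    (Fin.revPerm * finRotate (N+2) * Fin.revPerm : Perm (Fin (N+2))) * finRotate (N+2) = 1 := by
  ext i
  simp only [Equiv.Perm.mul_apply, Equiv.Perm.one_apply, finRotate_succ_apply,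
    Fin.revPerm_apply, Fin.val_add, Fin.val_rev, Fin.val_one', Nat.one_mod]
  rw [mod2 _ _ (by omega), mod2 _ _ (by omega)]
  split_ifs <;> omega

lemma rev_conj_rot {N : ℕ} (z : ℤ) :
    (Fin.revPerm : Perm (Fin (N+2))) * (finRotate (N+2))^z * Fin.revPerm = (finRotate (N+2))^(-z) := by
  have h1 : (Fin.revPerm : Perm (Fin (N+2))) * finRotate (N+2) * Fin.revPerm = (finRotate (N+2))⁻¹ := by
    exact eq_inv_of_mul_eq_one_left (rev_rot_rev (N := N))
  have : (MulAut.conj (Fin.revPerm : Perm (Fin (N+2)))) ((finRotate (N+2))^z)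
      = (finRotate (N+2))^(-z) := by
    have hrinv : (Fin.revPerm : Perm (Fin (N+2)))⁻¹ = Fin.revPerm := by
      rw [eq_comm, eq_inv_iff_mul_eq_one, rev_mul_rev]
    have h2 : (MulAut.conj (Fin.revPerm : Perm (Fin (N+2)))) (finRotate (N+2)) = (finRotate (N+2))⁻¹ := by
      rw [MulAut.conj_apply, hrinv]; exact h1
    rw [map_zpow, h2, inv_zpow, zpow_neg]
  simpa [MulAut.conj_apply, Fin.revPerm_symm, inv_eq_of_mul_eq_one_right (rev_mul_rev (n := N+2))] using this

lemma dihedral_mem {N : ℕ} (x : Perm (Fin (N+2)))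
    (hx : x ∈ Subgroup.closure {finRotate (N+2), Fin.revPerm}) :
    ∃ z : ℤ, x = (finRotate (N+2))^z ∨ x = (finRotate (N+2))^z * Fin.revPerm := by
  induction hx using Subgroup.closure_induction with
  | mem y hy =>
      rcases hy with rfl | rfl
      · exact ⟨1, Or.inl (by simp)⟩
      · exact ⟨0, Or.inr (by simp)⟩
  | one => exact ⟨0, Or.inl (by simp)⟩
  | mul a b _ _ ha hb =>
      obtain ⟨za, ha⟩ := ha
      obtain ⟨zb, hb⟩ := hb
      have key := rev_conj_rot (N := N)
      have hrr := rev_mul_rev (n := N+2)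
      have swap : ∀ w : ℤ, (Fin.revPerm : Perm (Fin (N+2))) * (finRotate (N+2))^w
          = (finRotate (N+2))^(-w) * Fin.revPerm := by
        intro w
        have := key w
        calc (Fin.revPerm : Perm (Fin (N+2))) * (finRotate (N+2))^w
            = ((Fin.revPerm : Perm (Fin (N+2))) * (finRotate (N+2))^w * Fin.revPerm) * Fin.revPerm := by
              rw [mul_assoc, hrr, mul_one]
          _ = (finRotate (N+2))^(-w) * Fin.revPerm := by rw [this]
      rcases ha with rfl | rfl <;> rcases hb with rfl | rfl
      · exact ⟨za + zb, Or.inl (by rw [zpow_add])⟩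
      · exact ⟨za + zb, Or.inr (by rw [zpow_add, mul_assoc])⟩
      · refine ⟨za - zb, Or.inr ?_⟩
        rw [mul_assoc, swap zb, ← mul_assoc, ← zpow_add, sub_eq_add_neg]
      · refine ⟨za - zb, Or.inl ?_⟩
        rw [mul_assoc, ← mul_assoc (Fin.revPerm : Perm (Fin (N+2))), swap zb,
          mul_assoc, hrr, mul_one, ← zpow_add, sub_eq_add_neg]
  | inv a _ ha =>
      obtain ⟨za, ha⟩ := ha
      rcases ha with rfl | rfl
      · exact ⟨-za, Or.inl (by rw [← zpow_neg])⟩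
      · refine ⟨za, Or.inr ?_⟩
        have swap : ∀ w : ℤ, (Fin.revPerm : Perm (Fin (N+2))) * (finRotate (N+2))^w
            = (finRotate (N+2))^(-w) * Fin.revPerm := by
          intro w
          calc (Fin.revPerm : Perm (Fin (N+2))) * (finRotate (N+2))^w
              = ((Fin.revPerm : Perm (Fin (N+2))) * (finRotate (N+2))^w * Fin.revPerm) * Fin.revPerm := by
                rw [mul_assoc, rev_mul_rev, mul_one]
            _ = (finRotate (N+2))^(-w) * Fin.revPerm := by rw [rev_conj_rot]
        have h1 : (finRotate (N+2)^za * (Fin.revPerm : Perm (Fin (N+2)))) * (finRotate (N+2)^za * Fin.revPerm) = 1 := by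
          rw [mul_assoc, ← mul_assoc (Fin.revPerm : Perm (Fin (N+2))), swap za,
            mul_assoc, rev_mul_rev, mul_one, ← zpow_add]
          simp
        exact inv_eq_of_mul_eq_one_right h1

/-- Order-agreement on edges of `Y`. -/
def OrdIff {n : ℕ} (Y : SimpleGraph (Fin n)) (τ τ' : Perm (Fin n)) : Prop :=
  ∀ u v, Y.Adj u v → (τ.symm u < τ.symm v ↔ τ'.symm u < τ'.symm v)

lemma swap_consec_lt {n k : ℕ} (hk : k + 1 < n) (p q : Fin n)
    (h1 : ¬(p = ⟨k, Nat.lt_of_succ_lt hk⟩ ∧ q = ⟨k+1, hk⟩))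
    (h2 : ¬(p = ⟨k+1, hk⟩ ∧ q = ⟨k, Nat.lt_of_succ_lt hk⟩)) :
    (p < q ↔ Equiv.swap ⟨k, Nat.lt_of_succ_lt hk⟩ ⟨k+1, hk⟩ p
      < Equiv.swap ⟨k, Nat.lt_of_succ_lt hk⟩ ⟨k+1, hk⟩ q) := by
  simp only [Equiv.swap_apply_def]
  split_ifs <;>
    (simp only [Fin.ext_iff, Fin.lt_def, not_and] at * <;> omega)

lemma updateAdj_ordIff {n : ℕ} (Y : SimpleGraph (Fin n)) (τ τ' : Perm (Fin n))
    (h : UpdateAdj Y τ τ') : OrdIff Y τ τ' := by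
  obtain ⟨k, hk, hnadj, rfl⟩ := h
  intro u v hadj
  rw [Equiv.Perm.mul_def, Equiv.symm_trans_apply, Equiv.symm_trans_apply, Equiv.symm_swap]
  exact swap_consec_lt hk _ _
    (fun ⟨ha, hb⟩ => hnadj (by
      have hu : u = τ ⟨k, Nat.lt_of_succ_lt hk⟩ := by
        rw [← ha]; exact (Equiv.apply_symm_apply τ u).symm
      have hv : v = τ ⟨k+1, hk⟩ := by
        rw [← hb]; exact (Equiv.apply_symm_apply τ v).symm
      exact hu ▸ hv ▸ hadj))
    (fun ⟨ha, hb⟩ => hnadj (by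
      have hu : u = τ ⟨k+1, hk⟩ := by
        rw [← ha]; exact (Equiv.apply_symm_apply τ u).symm
      have hv : v = τ ⟨k, Nat.lt_of_succ_lt hk⟩ := by
        rw [← hb]; exact (Equiv.apply_symm_apply τ v).symm
      exact (hu ▸ hv ▸ hadj : Y.Adj _ _).symm))

end Helpers

/-- if Y is connected on n vertices, g ≠ g' are elements of the
dihedral group D_n = ⟨σ, ρ⟩ (generated by the cyclic shift and the reversal,
acting on positions), and g·π ∼_Y g'·π, then Y is bipartite (2-colorable). -/
theorem dihedral_coincidence_implies_bipartite {n : ℕ} (Y : SimpleGraph (Fin n))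
    (hY : Y.Connected) (π : Equiv.Perm (Fin n)) (g g' : Equiv.Perm (Fin n))
    (hg : g ∈ Subgroup.closure {finRotate n, Fin.revPerm})
    (hg' : g' ∈ Subgroup.closure {finRotate n, Fin.revPerm})
    (hne : g ≠ g')
    (h : Relation.EqvGen (UpdateAdj Y) (π * g) (π * g')) :
    Y.Colorable 2 := by
  -- dispose of tiny n
  by_cases hn2 : n < 2
  · exfalso
    have hss : Subsingleton (Fin n) := ⟨fun a b => Fin.ext (by omega)⟩
    exact hne (Equiv.ext fun x => Subsingleton.elim _ _)
  obtain ⟨N, rfl⟩ : ∃ N, n = N + 2 := ⟨n - 2, by omega⟩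
  clear hn2
  set σ : Perm (Fin (N+2)) := finRotate (N+2) with hσ
  -- order agreement along the equivalence
  have hEgen : ∀ a b : Perm (Fin (N+2)), Relation.EqvGen (UpdateAdj Y) a b → OrdIff Y a b := by
    intro a b hab
    induction hab with
    | rel a b hab => exact updateAdj_ordIff Y a b hab
    | refl a => exact fun u v _ => Iff.rfl
    | symm a b _ ih => exact fun u v hadj => (ih u v hadj).symm
    | trans a b c _ _ ih1 ih2 => exact fun u v hadj => (ih1 u v hadj).trans (ih2 u v hadj)
  have hE : OrdIff Y (π * g) (π * g') := hEgen _ _ h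
  set w : Perm (Fin (N+2)) := g⁻¹ * g' with hw
  have hwmem : w ∈ Subgroup.closure {finRotate (N+2), Fin.revPerm} :=
    mul_mem (inv_mem hg) hg'
  have hwne : w ≠ 1 := by
    intro hone
    rw [hw] at hone
    exact hne (inv_mul_eq_one.mp hone)
  have hprod : π * g' = (π * g) * w := by rw [hw]; group
  have hsymm : ∀ x, (π * g').symm x = w⁻¹ ((π * g).symm x) := by
    intro x; rw [hprod]; rfl
  set f : Perm (Fin (N+2)) := (π * g)⁻¹ with hf
  have hEdge : ∀ u v, Y.Adj u v → (f u < f v ↔ w⁻¹ (f u) < w⁻¹ (f v)) := by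
    intro u v hadj
    have := hE u v hadj
    rw [hsymm u, hsymm v] at this
    exact this
  -- reduce w to a normal form
  obtain ⟨z, hz⟩ := dihedral_mem w hwmem
  have hnpos : (0:ℤ) < (N+2:ℕ) := by positivity
  have hzred : σ ^ z = σ ^ ((z % (N+2:ℕ)).toNat) := by
    have hord : (σ ^ ((N+2:ℕ):ℤ)) = 1 := by
      rw [zpow_natCast, hσ]; exact rot_order
    calc σ ^ z = σ ^ (((N+2:ℕ):ℤ) * (z / (N+2:ℕ)) + z % (N+2:ℕ)) := by
          rw [Int.mul_ediv_add_emod]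
      _ = (σ ^ ((N+2:ℕ):ℤ)) ^ (z / (N+2:ℕ)) * σ ^ (z % (N+2:ℕ)) := by
          rw [zpow_add, zpow_mul]
      _ = σ ^ (z % (N+2:ℕ)) := by rw [hord, one_zpow, one_mul]
      _ = σ ^ ((z % (N+2:ℕ)).toNat) := by
          rw [← zpow_natCast, Int.toNat_of_nonneg (Int.emod_nonneg z (by omega))]
  set k : ℕ := (z % (N+2:ℕ)).toNat with hkdef
  have hkn : k < N + 2 := by
    have h1 := Int.emod_lt_of_pos z hnpos
    have h2 := Int.emod_nonneg z (show ((N+2:ℕ):ℤ) ≠ 0 by omega)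
    omega
  have hform : w = σ ^ k ∨ w = σ ^ k * Fin.revPerm := by
    rcases hz with hz | hz
    · exact Or.inl (by rw [hz, ← hσ, hzred])
    · exact Or.inr (by rw [hz, ← hσ, hzred])
  have hpowinv : σ ^ k * σ ^ (N + 2 - k) = 1 := by
    rw [← pow_add]
    have : k + (N + 2 - k) = N + 2 := by omega
    rw [this, hσ]
    exact rot_order
  rcases hform with hcase | hcase
  · -- rotation case: contradiction with connectivity
    exfalso
    have hk0 : 0 < k := by
      rcases Nat.eq_zero_or_pos k with h0 | h0
      · exact absurd (by rw [hcase, h0, pow_zero]) hwne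
      · exact h0
    have hwinv : w⁻¹ = σ ^ (N + 2 - k) := by
      rw [hcase]; exact inv_eq_of_mul_eq_one_right hpowinv
    have edge : ∀ u v, Y.Adj u v → (((f u : Fin (N+2)) : ℕ) < k ↔ ((f v : Fin (N+2)) : ℕ) < k) := by
      intro u v hadj
      refine cutA (N+2) _ _ k (Fin.is_lt _) (Fin.is_lt _) hk0 hkn ?_
      have := hEdge u v hadj
      rw [hwinv] at this
      simpa only [Fin.lt_def, hσ, rot_val] using this
    have key : ∀ a b : Fin (N+2), Y.Walk a b →
        (((f a : Fin (N+2)) : ℕ) < k ↔ ((f b : Fin (N+2)) : ℕ) < k) := by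
      intro a b wk
      induction wk with
      | nil => exact Iff.rfl
      | cons hadj _ ih => exact (edge _ _ hadj).trans ih
    obtain ⟨wk⟩ := hY.preconnected ((π * g) ⟨0, by omega⟩) ((π * g) ⟨k, by omega⟩)
    have hthis := key _ _ wk
    rw [hf] at hthis
    simp only [Equiv.Perm.inv_def, Equiv.symm_apply_apply] at hthis
    omega
  · -- reflection case: Y is bipartite
    have hwinv : w⁻¹ = Fin.revPerm * σ ^ (N + 2 - k) := by
      rw [hcase]
      refine inv_eq_of_mul_eq_one_right ?_
      rw [mul_assoc, ← mul_assoc (Fin.revPerm : Perm (Fin (N+2))), rev_mul_rev, one_mul]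
      exact hpowinv
    have edge : ∀ u v, Y.Adj u v →
        (((f u : Fin (N+2)) : ℕ) < k ↔ ¬ ((f v : Fin (N+2)) : ℕ) < k) := by
      intro u v hadj
      refine cutB (N+2) _ _ k (Fin.is_lt _) (Fin.is_lt _) hkn
        (fun hPQ => hadj.ne (f.injective (Fin.ext hPQ))) ?_
      have := hEdge u v hadj
      rw [hwinv] at this
      simpa only [Fin.lt_def, Equiv.Perm.mul_apply, Fin.revPerm_apply, Fin.val_rev,
        hσ, rot_val] using this
    refine ⟨SimpleGraph.Coloring.mk
      (fun v => if ((f v : Fin (N+2)) : ℕ) < k then (0 : Fin 2) else 1) ?_⟩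
    intro u v hadj
    have hiff := edge u v hadj
    by_cases h1 : ((f u : Fin (N+2)) : ℕ) < k
    · have h2 : ¬ ((f v : Fin (N+2)) : ℕ) < k := hiff.mp h1
      simp [h1, h2]
    · have h2 : ((f v : Fin (N+2)) : ℕ) < k := by tauto
      simp [h1, h2]

end AcycPaper
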